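/- For every γ > 1 the following quantity is infinite: sup over all finite sets E ⊆ {(i,j) ∈ ℕ² : 1 ≤ i < j} and all reals (a_{ij})_{(i,j)∈E} with Σ_{(i,j)∈E} a_{ij}² ≤ 1 of sup_{1≤p<∞} p^{−1/γ}·‖Σ_{(i,j)∈E} a_{ij}·r_i·r_j·r_{i+j}‖_{L_p[0,1]}. Equivalently, for every M > 0 there exist such E, (a_{ij}) and p ∈ [1,∞) with p^{−1/γ}·‖Σ_{(i,j)∈E} a_{ij}·r_i·r_j·r_{i+j}‖_{L_p[0,1]} > M. (The unboundedness of the chaos over A = {(i,j,i+j) : i < j} in Exp L^γ for γ > 1, stated via the extrapolation description of the Exp L^γ norm.) -/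

import Mathlib

open MeasureTheory

/-- Rademacher function `r_j(t) = (-1)^⌊2^j t⌋`. -/
noncomputable def rademacher (j : ℕ) (t : ℝ) : ℝ := (-1 : ℝ) ^ ⌊(2 : ℝ) ^ j * t⌋

/-- Rademacher chaos `𝐫_ȷ = ∏ i, r_{ȷ i}`. -/
noncomputable def chaos {d : ℕ} (j : Fin d → ℕ) (t : ℝ) : ℝ := ∏ i, rademacher (j i) t

/-- The lower triangular index set `Δ^d = {ȷ : j₁ > j₂ > ... > j_d ≥ 1}`. -/
def Delta (d : ℕ) : Set (Fin d → ℕ) := {j | StrictAnti j ∧ ∀ i, 1 ≤ j i}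

/-- The `L_p[0,1]` norm, `1 ≤ p < ∞`. -/
noncomputable def LpNorm (p : ℝ) (f : ℝ → ℝ) : ℝ :=
  (∫ t in Set.Icc (0 : ℝ) 1, |f t| ^ p) ^ (1 / p)

/-- The `L_∞[0,1]` norm (essential supremum on `[0,1]`). -/
noncomputable def LinftyNorm (f : ℝ → ℝ) : ℝ :=
  (eLpNorm f ⊤ (volume.restrict (Set.Icc (0 : ℝ) 1))).toReal

lemma measurable_rademacher (j : ℕ) : Measurable (rademacher j) := by
  unfold rademacher
  exact (measurable_from_top (f := fun k : ℤ => ((-1 : ℝ)) ^ k)).comp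
    ((measurable_const.mul measurable_id).floor)

lemma abs_rademacher (j : ℕ) (t : ℝ) : |rademacher j t| = 1 := by
  unfold rademacher
  rcases Int.even_or_odd ⌊(2 : ℝ) ^ j * t⌋ with h | h
  · rw [h.neg_one_zpow]; norm_num
  · rw [h.neg_one_zpow]; norm_num


lemma rademacher_eq_one {j N : ℕ} (hj : j ≤ N) {t : ℝ} (ht0 : 0 ≤ t)
    (ht : t < ((2 : ℝ) ^ N)⁻¹) : rademacher j t = 1 := by
  have h1 : ⌊(2 : ℝ) ^ j * t⌋ = 0 := by
    apply Int.floor_eq_zero_iff.mpr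
    constructor
    · positivity
    · calc (2 : ℝ) ^ j * t < 2 ^ j * (2 ^ N)⁻¹ :=
            mul_lt_mul_of_pos_left ht (pow_pos two_pos j)
        _ ≤ 1 := by
            rw [← div_eq_mul_inv, div_le_one (by positivity)]
            exact pow_le_pow_right₀ one_le_two hj
  unfold rademacher
  rw [h1, zpow_zero]

/-- for every `γ > 1` the chaos over `A = {(i,j,i+j) : i < j}` is
unbounded in the extrapolation norm `sup_{p≥1} p^{-1/γ} ‖·‖_p` of `Exp L^γ`,
uniformly over `ℓ₂`-normalized coefficients. -/
theorem stmt17 (γ : ℝ) (hγ : 1 < γ) (M : ℝ) (hM : 0 < M) :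
    ∃ E : Finset (ℕ × ℕ), (∀ q ∈ E, 1 ≤ q.1 ∧ q.1 < q.2) ∧
      ∃ a : ℕ × ℕ → ℝ, (∑ q ∈ E, (a q) ^ 2) ≤ 1 ∧
        ∃ p : ℝ, 1 ≤ p ∧
          M < p ^ (-(1 : ℝ) / γ) * LpNorm p (fun t => ∑ q ∈ E,
            a q * (rademacher q.1 t * rademacher q.2 t * rademacher (q.1 + q.2) t)) := by
  have hγ0 : (0 : ℝ) < γ := lt_trans one_pos hγ
  set α : ℝ := 1 - 1 / γ with hα
  have hα0 : 0 < α := by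
    have : 1 / γ < 1 := by rw [div_lt_one hγ0]; exact hγ
    simp only [hα]; linarith
  -- choose m large
  obtain ⟨m, hm2, hmM⟩ : ∃ m : ℕ, 2 ≤ m ∧ (8 * M) ^ (1 / α) < (m : ℝ) := by
    refine ⟨⌈(8 * M) ^ (1 / α)⌉₊ + 2, by omega, ?_⟩
    have h1 : (8 * M) ^ (1 / α) ≤ (⌈(8 * M) ^ (1 / α)⌉₊ : ℝ) := Nat.le_ceil _
    push_cast
    linarith
  have hm0 : (0 : ℝ) < (m : ℝ) := by exact_mod_cast (by omega : 0 < m)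
  set p : ℝ := (m : ℝ) with hp
  have hp1 : (1 : ℝ) ≤ p := by rw [hp]; exact_mod_cast (by omega : 1 ≤ m)
  have hp0 : (0 : ℝ) < p := lt_of_lt_of_le one_pos hp1
  set E : Finset (ℕ × ℕ) := Finset.Icc 1 m ×ˢ Finset.Icc (m + 1) (2 * m) with hE
  set a : ℕ × ℕ → ℝ := fun _ => (m : ℝ)⁻¹ with ha
  set ε : ℝ := ((2 : ℝ) ^ (3 * m))⁻¹ with hε
  have hε0 : 0 < ε := by positivity
  have hε1 : ε ≤ 1 := by
    rw [hε]
    exact inv_le_one_of_one_le₀ (one_le_pow₀ one_le_two)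
  have hcard : E.card = m * m := by
    rw [hE, Finset.card_product, Nat.card_Icc, Nat.card_Icc]
    have h1 : m + 1 - 1 = m := by omega
    have h2 : 2 * m + 1 - (m + 1) = m := by omega
    rw [h1, h2]
  set F : ℝ → ℝ := fun t => ∑ q ∈ E,
      a q * (rademacher q.1 t * rademacher q.2 t * rademacher (q.1 + q.2) t) with hF
  -- F equals m on [0, ε)
  have hFval : ∀ t ∈ Set.Ico (0 : ℝ) ε, F t = (m : ℝ) := by
    rintro t ⟨ht0, htε⟩
    have hr : ∀ j ≤ 3 * m, rademacher j t = 1 := fun j hj =>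
      rademacher_eq_one hj ht0 htε
    have hterm : ∀ q ∈ E,
        a q * (rademacher q.1 t * rademacher q.2 t * rademacher (q.1 + q.2) t)
          = (m : ℝ)⁻¹ := by
      intro q hq
      rw [hE, Finset.mem_product, Finset.mem_Icc, Finset.mem_Icc] at hq
      rw [hr q.1 (by omega), hr q.2 (by omega), hr (q.1 + q.2) (by omega), ha]
      ring
    rw [hF]
    beta_reduce
    rw [Finset.sum_congr rfl hterm, Finset.sum_const, hcard, nsmul_eq_mul]
    push_cast
    field_simp
  have hFabs : ∀ t, |F t| ≤ (m : ℝ) := by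
    intro t
    calc |F t| ≤ ∑ q ∈ E,
          |a q * (rademacher q.1 t * rademacher q.2 t * rademacher (q.1 + q.2) t)| :=
        Finset.abs_sum_le_sum_abs _ _
      _ = ∑ q ∈ E, (m : ℝ)⁻¹ := by
          apply Finset.sum_congr rfl
          intro q _
          rw [abs_mul, abs_mul, abs_mul, abs_rademacher, abs_rademacher, abs_rademacher, ha]
          simp [abs_of_nonneg (inv_nonneg.mpr hm0.le)]
      _ = (m : ℝ) := by
          rw [Finset.sum_const, hcard, nsmul_eq_mul]
          push_cast
          field_simp
  have hFm : Measurable F := by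
    rw [hF]
    exact Finset.measurable_sum _ (fun q _ =>
      (measurable_const.mul (((measurable_rademacher _).mul
        (measurable_rademacher _)).mul (measurable_rademacher _))))
  have hInt : IntegrableOn (fun t => |F t| ^ p) (Set.Icc (0 : ℝ) 1) volume := by
    apply Measure.integrableOn_of_bounded (M := (m : ℝ) ^ p)
    · simp [Real.volume_Icc]
    · exact ((Real.continuous_rpow_const hp0.le).measurable.comp hFm.abs).aestronglyMeasurable
    · filter_upwards with t
      rw [Real.norm_eq_abs, abs_of_nonneg (Real.rpow_nonneg (abs_nonneg _) _)]
      exact Real.rpow_le_rpow (abs_nonneg _) (hFabs t) hp0.le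
  have key : (m : ℝ) ^ p * ε ≤ ∫ t in Set.Icc (0 : ℝ) 1, |F t| ^ p := by
    have h1 : ∫ t in Set.Ico (0 : ℝ) ε, |F t| ^ p = (m : ℝ) ^ p * ε := by
      rw [setIntegral_congr_fun measurableSet_Ico
        (g := fun _ => (m : ℝ) ^ p) (fun t ht => by rw [hFval t ht, abs_of_nonneg hm0.le])]
      rw [setIntegral_const, measureReal_def, Real.volume_Ico, smul_eq_mul, sub_zero,
        ENNReal.toReal_ofReal hε0.le, mul_comm]
    rw [← h1]
    apply setIntegral_mono_set hInt
    · filter_upwards with t using Real.rpow_nonneg (abs_nonneg _) _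
    · apply HasSubset.Subset.eventuallyLE
      intro t ht
      exact ⟨ht.1, le_trans ht.2.le hε1⟩
  -- Lp norm lower bound: m / 8
  have hεr : ε = (2 : ℝ) ^ (-(3 * p)) := by
    rw [hε, ← Real.rpow_natCast 2 (3 * m), ← Real.rpow_neg (by norm_num)]
    push_cast
    norm_num
    rw [hp]
  have hL : (m : ℝ) / 8 ≤ LpNorm p F := by
    have h2 : ((m : ℝ) ^ p * ε) ^ (1 / p) ≤
        (∫ t in Set.Icc (0 : ℝ) 1, |F t| ^ p) ^ (1 / p) :=
      Real.rpow_le_rpow (by positivity) key (by positivity)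
    have h3 : ((m : ℝ) ^ p * ε) ^ (1 / p) = (m : ℝ) / 8 := by
      rw [hεr, Real.mul_rpow (by positivity) (by positivity),
        ← Real.rpow_mul hm0.le, ← Real.rpow_mul (by norm_num),
        mul_one_div_cancel hp0.ne', Real.rpow_one]
      have : -(3 * p) * (1 / p) = -3 := by field_simp
      rw [this, show ((-3 : ℝ)) = ((-3 : ℤ) : ℝ) by norm_num, Real.rpow_intCast]
      norm_num
      ring
    rw [LpNorm, ← h3]
    exact h2
  refine ⟨E, ?_, a, ?_, p, hp1, ?_⟩
  · intro q hq
    rw [hE, Finset.mem_product, Finset.mem_Icc, Finset.mem_Icc] at hq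
    omega
  · rw [ha, Finset.sum_const, hcard, nsmul_eq_mul]
    push_cast
    rw [inv_pow]
    rw [mul_inv_le_iff₀ (by positivity)]
    ring_nf
    rfl
  · have hpow : (0 : ℝ) < p ^ (-(1 : ℝ) / γ) := Real.rpow_pos_of_pos hp0 _
    have hmain : 8 * M < (m : ℝ) ^ α := by
      have h5 : ((8 * M) ^ (1 / α)) ^ α < (m : ℝ) ^ α :=
        Real.rpow_lt_rpow (Real.rpow_nonneg (by positivity) _) hmM hα0
      rwa [← Real.rpow_mul (by positivity), one_div_mul_cancel hα0.ne',
        Real.rpow_one] at h5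
    have hprod : p ^ (-(1 : ℝ) / γ) * (m : ℝ) = (m : ℝ) ^ α := by
      rw [show p ^ (-(1 : ℝ) / γ) * (m : ℝ) = p ^ (-(1 : ℝ) / γ) * p ^ (1 : ℝ) by
        rw [Real.rpow_one], ← Real.rpow_add hp0]
      rw [hα, hp]
      congr 1
      ring
    calc M < (m : ℝ) ^ α / 8 := by linarith
      _ = p ^ (-(1 : ℝ) / γ) * ((m : ℝ) / 8) := by rw [← hprod]; ring
      _ ≤ p ^ (-(1 : ℝ) / γ) * LpNorm p F := by
          apply mul_le_mul_of_nonneg_left hL hpow.le
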